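/- Let N ≥ 1 and α > N/2. For u = (u_1,...,u_N) with each u_j ∈ H^3(0,ℓ_j), satisfying u_j(ℓ_j) = u_j'(ℓ_j) = 0 for all j, u_j(0) = u_k(0) for all j,k, and Σ_{j=1}^N u_j''(0) = -α u_1(0), one has Σ_{j=1}^N ∫_0^{ℓ_j} u_j(x)(-u_j'(x) - u_j'''(x)) dx = (N/2 - α)|u_1(0)|^2 - (1/2) Σ_{j=1}^N |u_j'(0)|^2 ≤ 0. Hence the operator A u = -(u_j' + u_j''')_j with this domain is dissipative on Π_j L^2(0,ℓ_j). -/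

import Mathlib

open scoped BigOperators
open MeasureTheory intervalIntegral Real Set

private lemma key_int (ℓ : ℝ) (u : ℝ → ℝ) (hu : ContDiff ℝ 3 u)
    (h1 : u ℓ = 0) (h2 : deriv u ℓ = 0) :
    ∫ x in (0:ℝ)..ℓ, u x * (-(deriv u x) - iteratedDeriv 3 u x)
      = (u 0)^2/2 + u 0 * iteratedDeriv 2 u 0 - (deriv u 0)^2/2 := by
  have hd0 : Differentiable ℝ u := hu.differentiable (by norm_num)
  have hd1 : Differentiable ℝ (deriv u) := by
    have := hu.differentiable_iteratedDeriv 1 (by norm_num)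
    simpa [iteratedDeriv_one] using this
  have hd2 : Differentiable ℝ (iteratedDeriv 2 u) :=
    hu.differentiable_iteratedDeriv 2 (by norm_num)
  have e2 : iteratedDeriv 2 u = deriv (deriv u) := by
    rw [show (2:ℕ) = 1 + 1 from rfl, iteratedDeriv_succ, iteratedDeriv_one]
  have e3 : iteratedDeriv 3 u = deriv (iteratedDeriv 2 u) := by
    rw [show (3:ℕ) = 2 + 1 from rfl, iteratedDeriv_succ]
  have hF : ∀ x ∈ uIcc (0:ℝ) ℓ, HasDerivAt
      (fun x => -(u x * u x / 2) - u x * iteratedDeriv 2 u x + deriv u x * deriv u x / 2)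
      (u x * (-(deriv u x) - iteratedDeriv 3 u x)) x := by
    intro x _
    have hu' : HasDerivAt u (deriv u x) x := (hd0 x).hasDerivAt
    have hu'' : HasDerivAt (deriv u) (iteratedDeriv 2 u x) x := by
      rw [e2]; exact (hd1 x).hasDerivAt
    have hu''' : HasDerivAt (iteratedDeriv 2 u) (iteratedDeriv 3 u x) x := by
      rw [e3]; exact (hd2 x).hasDerivAt
    have hA := ((hu'.mul hu').div_const 2).neg
    have hB := hu'.mul hu'''
    have hC := (hu''.mul hu'').div_const 2
    have := (hA.sub hB).add hC
    exact this.congr_deriv (by ring)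
  have hcont : ContinuousOn (fun x => u x * (-(deriv u x) - iteratedDeriv 3 u x))
      (uIcc (0:ℝ) ℓ) := by
    apply Continuous.continuousOn
    exact hu.continuous.mul ((hd1.continuous.neg).sub
      (hu.continuous_iteratedDeriv 3 (by norm_num)))
  have := intervalIntegral.integral_eq_sub_of_hasDerivAt hF hcont.intervalIntegrable
  rw [this, h1, h2]
  ring

theorem stmt1 (N : ℕ) (hN : 0 < N) (α : ℝ) (hα : (N : ℝ) / 2 < α)
    (ℓ : Fin N → ℝ) (hℓ : ∀ j, 0 < ℓ j) (u : Fin N → ℝ → ℝ)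
    (hu : ∀ j, ContDiff ℝ 3 (u j))
    (hext : ∀ j, u j (ℓ j) = 0 ∧ deriv (u j) (ℓ j) = 0)
    (hcont : ∀ j k, u j 0 = u k 0)
    (hnode : ∑ j, iteratedDeriv 2 (u j) 0 = -α * u ⟨0, hN⟩ 0) :
    ∑ j, ∫ x in (0:ℝ)..(ℓ j), u j x * (-(deriv (u j) x) - iteratedDeriv 3 (u j) x)
      = ((N : ℝ)/2 - α) * (u ⟨0, hN⟩ 0)^2 - (1/2) * ∑ j, (deriv (u j) 0)^2 ∧
    ((N : ℝ)/2 - α) * (u ⟨0, hN⟩ 0)^2 - (1/2) * ∑ j, (deriv (u j) 0)^2 ≤ 0 := by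
  set c := u ⟨0, hN⟩ 0 with hc
  have huc : ∀ j, u j 0 = c := fun j => hcont j ⟨0, hN⟩
  constructor
  · have hint : ∀ j, ∫ x in (0:ℝ)..(ℓ j), u j x * (-(deriv (u j) x) - iteratedDeriv 3 (u j) x)
        = (u j 0)^2/2 + u j 0 * iteratedDeriv 2 (u j) 0 - (deriv (u j) 0)^2/2 :=
      fun j => key_int (ℓ j) (u j) (hu j) (hext j).1 (hext j).2
    simp_rw [hint, huc]
    rw [Finset.sum_sub_distrib, Finset.sum_add_distrib, ← Finset.mul_sum, hnode,
      Finset.sum_const, Finset.card_univ, Fintype.card_fin, ← Finset.sum_div,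
      nsmul_eq_mul]
    ring
  · have h1 : ((N : ℝ)/2 - α) * c^2 ≤ 0 :=
      mul_nonpos_of_nonpos_of_nonneg (by linarith) (sq_nonneg c)
    have h2 : (0:ℝ) ≤ ∑ j, (deriv (u j) 0)^2 :=
      Finset.sum_nonneg fun j _ => sq_nonneg _
    linarith
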